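/- Let 𝒜 be a finite list in a finitely generated abelian group Γ, and let G be a torsion-wise finite abelian group. Suppose 𝒜 ⊂ Γ_tor. Then T_𝒜^G(x,y) = Σ_{k=0}^{#𝒜} ( Σ_{𝒮⊂𝒜, #𝒮=k} #M(𝒜/𝒮; Γ_tor/⟨𝒮⟩, G) ) y^k. In particular T_𝒜^G is a polynomial in y alone with nonnegative integer coefficients. -/

import Mathlib

def TorsionwiseFinite (G : Type*) [AddCommGroup G] : Prop :=
  ∀ d : ℕ, 0 < d → Finite {x : G // d • x = 0}

noncomputable def rk (Γ : Type*) [AddCommGroup Γ] (X : Set Γ) : ℕ :=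
  Module.finrank ℤ (AddSubgroup.closure X)

noncomputable def mult (Γ : Type*) [AddCommGroup Γ] (G : Type*) [AddCommGroup G]
    (X : Set Γ) : ℕ :=
  Nat.card ((AddCommGroup.torsion (Γ ⧸ AddSubgroup.closure X)) →+ G)

noncomputable def Tpoly {ι Γ : Type*} [AddCommGroup Γ] (G : Type*) [AddCommGroup G]
    (A : Finset ι) (a : ι → Γ) (x y : ℤ) : ℤ :=
  ∑ S ∈ A.powerset, (mult Γ G (a '' (S : Set ι)) : ℤ) *
    (x - 1) ^ (rk Γ (a '' (A : Set ι)) - rk Γ (a '' (S : Set ι))) *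
    (y - 1) ^ (S.card - rk Γ (a '' (S : Set ι)))

section Aux

variable {Γ : Type*} [AddCommGroup Γ]

open AddSubgroup

/-- Rank of a set of torsion elements is zero. -/
lemma rk_eq_zero_of_torsion {X : Set Γ} (hX : X ⊆ AddCommGroup.torsion Γ) :
    rk Γ X = 0 := by
  have hle : closure X ≤ AddCommGroup.torsion Γ := (closure_le _).mpr hX
  have hr : Module.rank ℤ (closure X) = 0 := by
    rw [rank_eq_zero_iff]
    intro x
    obtain ⟨n, hn, hx⟩ := isOfFinAddOrder_iff_nsmul_eq_zero.mp (hle x.2)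
    refine ⟨(n : ℤ), by exact_mod_cast hn.ne', ?_⟩
    apply Subtype.ext
    push_cast
    simpa using hx
  rw [rk, Module.finrank, hr]
  simp

/-- The torsion subgroup of a f.g. abelian group is finitely generated. -/
lemma torsion_fg (Γ : Type*) [AddCommGroup Γ] [AddGroup.FG Γ] :
    AddGroup.FG (AddCommGroup.torsion Γ) := by
  haveI : Module.Finite ℤ Γ := Module.Finite.iff_addGroup_fg.mpr ‹_›
  have hfg : (AddSubgroup.toIntSubmodule (AddCommGroup.torsion Γ)).FG :=
    IsNoetherian.noetherian _
  rw [Submodule.fg_iff_addSubgroup_fg] at hfg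
  exact (AddGroup.fg_iff_addSubgroup_fg _).mpr hfg

/-- Hom from the torsion subgroup of a f.g. abelian group to a torsion-wise finite group
form a finite set. -/
lemma finite_hom_torsion (Γ : Type*) [AddCommGroup Γ] [AddGroup.FG Γ]
    (G : Type*) [AddCommGroup G] (hG : TorsionwiseFinite G) :
    Finite ((AddCommGroup.torsion Γ) →+ G) := by
  haveI := torsion_fg Γ
  obtain ⟨n, s, -, hs⟩ := AddGroup.fg_iff'.mp ‹AddGroup.FG (AddCommGroup.torsion Γ)›
  have hord : ∀ g : AddCommGroup.torsion Γ, ∃ d : ℕ, 0 < d ∧ d • g = 0 := by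
    intro g
    obtain ⟨d, hd, hdg⟩ := isOfFinAddOrder_iff_nsmul_eq_zero.mp g.2
    exact ⟨d, hd, Subtype.ext (by simpa using hdg)⟩
  choose d hd hdg using hord
  haveI : ∀ g : s, Finite {x : G // d g • x = 0} := fun g => hG (d g) (hd g)
  haveI : Finite (∀ g : s, {x : G // d (g : AddCommGroup.torsion Γ) • x = 0}) :=
    Pi.finite
  refine Finite.of_injective
    (fun (φ : (AddCommGroup.torsion Γ) →+ G) =>
      (fun g : s => (⟨φ g, by rw [← map_nsmul, hdg, map_zero]⟩ :
        {x : G // d (g : AddCommGroup.torsion Γ) • x = 0}))) ?_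
  intro φ ψ h
  refine AddMonoidHom.eq_of_eqOn_dense hs ?_
  intro g hg
  have := congrFun h ⟨g, hg⟩
  simpa using this

variable {ι : Type*} (G : Type*) [AddCommGroup G]

/-- The multiplicity for a subset of torsion elements counts homomorphisms from the torsion
subgroup vanishing on the subset. -/
lemma mult_eq_card_vanishing (a : ι → AddCommGroup.torsion Γ) (S : Finset ι) :
    mult Γ G ((fun i => ((a i : AddCommGroup.torsion Γ) : Γ)) '' (S : Set ι)) =
    Nat.card {φ : (AddCommGroup.torsion Γ) →+ G // ∀ i ∈ S, φ (a i) = 0} := by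
  classical
  unfold mult
  set X : Set Γ := (fun i => ((a i : AddCommGroup.torsion Γ) : Γ)) '' (S : Set ι) with hX
  set H : AddSubgroup Γ := closure X with hH
  set K : AddSubgroup (AddCommGroup.torsion Γ) := closure (a '' (S : Set ι)) with hK
  have hmap : K.map (AddCommGroup.torsion Γ).subtype = H := by
    rw [hK, AddMonoidHom.map_closure]
    congr 1
    rw [← Set.image_comp]
    rfl
  have hfin : ∀ t : AddCommGroup.torsion Γ,
      IsOfFinAddOrder (((QuotientAddGroup.mk' H).comp
        (AddCommGroup.torsion Γ).subtype) t) :=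
    fun t => (QuotientAddGroup.mk' H).isOfFinAddOrder (t.2 : IsOfFinAddOrder (t : Γ))
  set e : (AddCommGroup.torsion Γ) →+ AddCommGroup.torsion (Γ ⧸ H) :=
    ((QuotientAddGroup.mk' H).comp (AddCommGroup.torsion Γ).subtype).codRestrict _ hfin
    with he
  have hHT : H ≤ AddCommGroup.torsion Γ := by
    rw [hH]
    refine (closure_le _).mpr ?_
    rintro _ ⟨i, hi, rfl⟩
    exact (a i).2
  have hsurj : Function.Surjective e := by
    rintro ⟨q, hq⟩
    obtain ⟨z, rfl⟩ := QuotientAddGroup.mk_surjective q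
    have hzT : z ∈ AddCommGroup.torsion Γ := by
      obtain ⟨m, hm, hmq⟩ := isOfFinAddOrder_iff_nsmul_eq_zero.mp hq
      have : m • z ∈ H := by
        rw [← QuotientAddGroup.eq_zero_iff, QuotientAddGroup.mk_nsmul]
        exact hmq
      have hmzT : IsOfFinAddOrder (m • z) := hHT this
      obtain ⟨k, hk, hkz⟩ := isOfFinAddOrder_iff_nsmul_eq_zero.mp hmzT
      exact isOfFinAddOrder_iff_nsmul_eq_zero.mpr
        ⟨k * m, Nat.mul_pos hk hm, by rwa [mul_smul]⟩
    exact ⟨⟨z, hzT⟩, rfl⟩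
  have hmem : ∀ t : AddCommGroup.torsion Γ, e t = 0 ↔ (t : Γ) ∈ H := by
    intro t
    rw [Subtype.ext_iff]
    exact QuotientAddGroup.eq_zero_iff _
  have hker : e.ker = K := by
    ext t
    rw [AddMonoidHom.mem_ker, hmem t, ← hmap]
    constructor
    · rintro ⟨k, hkK, hkt⟩
      rwa [show k = t from Subtype.ext hkt] at hkK
    · intro ht
      exact ⟨t, ht, rfl⟩
  have stepA : Nat.card ((AddCommGroup.torsion (Γ ⧸ H)) →+ G) =
      Nat.card {φ : (AddCommGroup.torsion Γ) →+ G // K ≤ φ.ker} := by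
    refine Nat.card_eq_of_bijective
      (fun ψ => ⟨ψ.comp e, ?_⟩) ⟨?_, ?_⟩
    · intro t ht
      have h0 : e t = 0 := by
        rw [← AddMonoidHom.mem_ker, hker]; exact ht
      simp [AddMonoidHom.mem_ker, h0]
    · intro ψ₁ ψ₂ h
      have h' := Subtype.ext_iff.mp h
      ext q
      obtain ⟨t, rfl⟩ := hsurj q
      exact congrArg (fun f : (AddCommGroup.torsion Γ) →+ G => f t) h'
    · rintro ⟨φ, hφ⟩
      set eq1 : ((AddCommGroup.torsion Γ) ⧸ K) ≃+ AddCommGroup.torsion (Γ ⧸ H) :=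
        (QuotientAddGroup.quotientAddEquivOfEq hker.symm).trans
          (QuotientAddGroup.quotientKerEquivOfSurjective e hsurj) with heq1
      refine ⟨(QuotientAddGroup.lift K φ (fun t ht => hφ ht)).comp
        (eq1.symm : AddCommGroup.torsion (Γ ⧸ H) ≃+
          ((AddCommGroup.torsion Γ) ⧸ K)).toAddMonoidHom, ?_⟩
      apply Subtype.ext
      ext t
      have h1 : eq1 (QuotientAddGroup.mk t) = e t := by
        rw [heq1]
        simp only [AddEquiv.trans_apply, QuotientAddGroup.quotientAddEquivOfEq_mk]
        exact QuotientAddGroup.kerLift_mk e t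
      have h2 : eq1.symm (e t) = QuotientAddGroup.mk t := by
        rw [← h1, AddEquiv.symm_apply_apply]
      simp [h2]
  rw [stepA]
  refine Nat.card_congr (Equiv.subtypeEquivRight fun φ => ?_)
  rw [hK, closure_le]
  constructor
  · intro h i hi
    exact h ⟨i, hi, rfl⟩
  · rintro h _ ⟨i, hi, rfl⟩
    exact h i hi

/-- Splitting of the count of homomorphisms vanishing on `S` according to the exact
vanishing locus within `A`. -/
lemma card_vanishing_split [DecidableEq ι] [hfin : Finite ((AddCommGroup.torsion Γ) →+ G)]
    (a : ι → AddCommGroup.torsion Γ) (A S : Finset ι) (hS : S ⊆ A) :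
    Nat.card {φ : (AddCommGroup.torsion Γ) →+ G // ∀ i ∈ S, φ (a i) = 0} =
    ∑ T ∈ A.powerset.filter (fun T => S ⊆ T),
      Nat.card {φ : (AddCommGroup.torsion Γ) →+ G //
        (∀ i ∈ T, φ (a i) = 0) ∧ (∀ i ∈ A \ T, φ (a i) ≠ 0)} := by
  classical
  haveI : Fintype ((AddCommGroup.torsion Γ) →+ G) := Fintype.ofFinite _
  simp only [Nat.card_eq_fintype_card, Fintype.card_subtype]
  rw [Finset.card_eq_sum_card_fiberwise
    (f := fun φ : (AddCommGroup.torsion Γ) →+ G => A.filter (fun i => φ (a i) = 0))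
    (t := A.powerset.filter (fun T => S ⊆ T))]
  · refine Finset.sum_congr rfl fun T hT => ?_
    obtain ⟨hTA, hST⟩ := Finset.mem_filter.mp hT
    rw [Finset.mem_powerset] at hTA
    rw [Finset.filter_filter]
    congr 1
    apply Finset.filter_congr
    intro φ _
    constructor
    · rintro ⟨-, hfib⟩
      constructor
      · intro i hi
        have : i ∈ A.filter (fun i => φ (a i) = 0) := hfib ▸ hi
        exact (Finset.mem_filter.mp this).2
      · intro i hi hzero
        obtain ⟨hiA, hiT⟩ := Finset.mem_sdiff.mp hi
        exact hiT (hfib ▸ Finset.mem_filter.mpr ⟨hiA, hzero⟩)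
    · rintro ⟨h0, hne⟩
      refine ⟨fun i hi => h0 i (hST hi), ?_⟩
      ext i
      rw [Finset.mem_filter]
      constructor
      · rintro ⟨hiA, hz⟩
        by_contra hiT
        exact hne i (Finset.mem_sdiff.mpr ⟨hiA, hiT⟩) hz
      · intro hiT
        exact ⟨hTA hiT, h0 i hiT⟩
  · intro φ hφ
    rw [Finset.mem_coe, Finset.mem_filter] at hφ ⊢
    refine ⟨Finset.mem_powerset.mpr (Finset.filter_subset _ _), ?_⟩
    intro i hi
    exact Finset.mem_filter.mpr ⟨hS hi, hφ.2 i hi⟩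

lemma sum_pow_card [DecidableEq ι] (z : ℤ) (T : Finset ι) :
    ∑ S ∈ T.powerset, z ^ S.card = (z + 1) ^ T.card := by
  rw [Finset.sum_powerset_apply_card (fun k => z ^ k), add_pow]
  refine Finset.sum_congr rfl fun k _ => ?_
  rw [one_pow, mul_one, nsmul_eq_mul, mul_comm]

end Aux

/-- If the list `𝒜` is contained in the torsion subgroup `Γ_tor`, then
`T_𝒜^G(x,y) = Σ_k (Σ_{#𝒮 = k} #M(𝒜/𝒮; Γ_tor/⟨𝒮⟩, G)) y^k`; in particular it is a
polynomial in `y` alone with nonnegative integer coefficients. -/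
theorem tutte_of_torsion_list {ι Γ : Type*} [DecidableEq ι] [AddCommGroup Γ] [AddGroup.FG Γ]
    (G : Type*) [AddCommGroup G] (hG : TorsionwiseFinite G)
    (A : Finset ι) (a : ι → AddCommGroup.torsion Γ) :
    ∀ x y : ℤ, Tpoly G A (fun i => ((a i : AddCommGroup.torsion Γ) : Γ)) x y =
      ∑ k ∈ Finset.range (A.card + 1),
        (∑ S ∈ A.powerset.filter (fun S => S.card = k),
          (Nat.card {φ : (AddCommGroup.torsion Γ) →+ G //
            (∀ i ∈ S, φ (a i) = 0) ∧ (∀ i ∈ A \ S, φ (a i) ≠ 0)} : ℤ)) * y ^ k := by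
  classical
  intro x y
  haveI : Finite ((AddCommGroup.torsion Γ) →+ G) := finite_hom_torsion Γ G hG
  set N : Finset ι → ℤ := fun T =>
    (Nat.card {φ : (AddCommGroup.torsion Γ) →+ G //
      (∀ i ∈ T, φ (a i) = 0) ∧ (∀ i ∈ A \ T, φ (a i) ≠ 0)} : ℤ) with hN
  have hrk : ∀ S : Finset ι,
      rk Γ ((fun i => ((a i : AddCommGroup.torsion Γ) : Γ)) '' (S : Set ι)) = 0 := by
    intro S
    apply rk_eq_zero_of_torsion
    rintro _ ⟨i, hi, rfl⟩
    exact (a i).2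
  have step1 : Tpoly G A (fun i => ((a i : AddCommGroup.torsion Γ) : Γ)) x y =
      ∑ S ∈ A.powerset, ∑ T ∈ A.powerset.filter (fun T => S ⊆ T),
        N T * (y - 1) ^ S.card := by
    rw [Tpoly]
    refine Finset.sum_congr rfl fun S hS => ?_
    rw [hrk S, hrk A, Nat.sub_zero, Nat.sub_zero, pow_zero, mul_one,
      mult_eq_card_vanishing G a S,
      card_vanishing_split G a A S (Finset.mem_powerset.mp hS)]
    push_cast
    rw [Finset.sum_mul]
  have step2 : ∑ S ∈ A.powerset, ∑ T ∈ A.powerset.filter (fun T => S ⊆ T),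
        N T * (y - 1) ^ S.card =
      ∑ T ∈ A.powerset, N T * y ^ T.card := by
    rw [Finset.sum_comm' (s' := fun T => T.powerset) (t' := A.powerset)]
    · refine Finset.sum_congr rfl fun T hT => ?_
      rw [← Finset.mul_sum, sum_pow_card, sub_add_cancel]
    · intro S T
      simp only [Finset.mem_powerset, Finset.mem_filter]
      constructor
      · rintro ⟨hSA, hTA, hST⟩
        exact ⟨hST, hTA⟩
      · rintro ⟨hST, hTA⟩
        exact ⟨hST.trans hTA, hTA, hST⟩
  have step3 : ∑ T ∈ A.powerset, N T * y ^ T.card =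
      ∑ k ∈ Finset.range (A.card + 1),
        (∑ S ∈ A.powerset.filter (fun S => S.card = k), N S) * y ^ k := by
    rw [← Finset.sum_fiberwise_of_maps_to (g := Finset.card) (t := Finset.range (A.card + 1))
      (fun T hT => Finset.mem_range.mpr
        (Nat.lt_succ_of_le (Finset.card_le_card (Finset.mem_powerset.mp hT))))]
    refine Finset.sum_congr rfl fun k _ => ?_
    rw [Finset.sum_mul]
    refine Finset.sum_congr rfl fun T hT => ?_
    rw [(Finset.mem_filter.mp hT).2]
  rw [step1, step2, step3]
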